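/- (Proposition 1, tube invariance part) Let $V \in \mathbb{R}^{n_v \times n_x}$. Let $\phi^j \in \mathbb{R}^{n_x \times n_x}$ and $B^j \in \mathbb{R}^{n_x \times n_u}$ for $j = 1, \dots, n_c$ be the vertex system matrices, and let $\mu_1, \dots, \mu_{n_c} \geq 0$ with $\sum_j \mu_j = 1$ define the true system $\phi^* = \sum_j \mu_j \phi^j$, $B^* = \sum_j \mu_j B^j$. Let $\hat{\phi} \in \mathbb{R}^{n_x \times n_x}$, $\hat{B} \in \mathbb{R}^{n_x \times n_u}$ be the nominal matrices. Suppose that for each $j$ there exists an entrywise nonnegative matrix $H^j \in \mathbb{R}^{n_v \times n_v}$ with $H^j V = V \phi^j$. Let $e, z \in \mathbb{R}^{n_x}$, $v \in \mathbb{R}^{n_u}$, $\alpha, \alpha' \in \mathbb{R}^{n_v}$ satisfy $Ve \leq \alpha$ and, for every $j$, $\alpha' \geq H^j \alpha + V\big((\phi^j - \hat{\phi})z + (B^j - \hat{B})v\big)$ (componentwise). Then the propagated error $e' = \phi^* e + (\phi^* - \hat{\phi})z + (B^* - \hat{B})v$ satisfies $Ve' \leq \alpha'$. -/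

import Mathlib

open Matrix Finset

private lemma sum_mulVec' {m n c : Type*} [Fintype n] [Fintype c]
    (M : c → Matrix m n ℝ) (x : n → ℝ) :
    (∑ j, M j) *ᵥ x = ∑ j, M j *ᵥ x := by
  ext i
  simp [Matrix.mulVec, dotProduct, Matrix.sum_apply, Finset.sum_apply, Finset.sum_mul]
  rw [Finset.sum_comm]

private lemma mulVec_sum' {m n c : Type*} [Fintype n] [Fintype c]
    (M : Matrix m n ℝ) (x : c → n → ℝ) :
    M *ᵥ (∑ j, x j) = ∑ j, M *ᵥ x j := by
  ext i
  simp [Matrix.mulVec, dotProduct, Finset.sum_apply, Finset.mul_sum]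
  rw [Finset.sum_comm]

/-- Proposition 1 (tube invariance part): if `Ve ≤ α` and the tube recursion
`α' ≥ Hʲα + V((φʲ - φ̂)z + (Bʲ - B̂)v)` holds for every vertex `j`, then the
propagated error `e' = φ* e + (φ* - φ̂)z + (B* - B̂)v` satisfies `Ve' ≤ α'`,
where `(φ*, B*)` is any convex combination of the vertices. -/
theorem tube_invariance
    {nx nu nv nc : ℕ}
    (V : Matrix (Fin nv) (Fin nx) ℝ)
    (φ : Fin nc → Matrix (Fin nx) (Fin nx) ℝ)
    (B : Fin nc → Matrix (Fin nx) (Fin nu) ℝ)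
    (μ : Fin nc → ℝ)
    (hμ_nonneg : ∀ j, 0 ≤ μ j)
    (hμ_sum : ∑ j, μ j = 1)
    (φstar : Matrix (Fin nx) (Fin nx) ℝ)
    (Bstar : Matrix (Fin nx) (Fin nu) ℝ)
    (hφstar : φstar = ∑ j, μ j • φ j)
    (hBstar : Bstar = ∑ j, μ j • B j)
    (φhat : Matrix (Fin nx) (Fin nx) ℝ)
    (Bhat : Matrix (Fin nx) (Fin nu) ℝ)
    (H : Fin nc → Matrix (Fin nv) (Fin nv) ℝ)
    (hH_nonneg : ∀ j i l, 0 ≤ H j i l)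
    (hHV : ∀ j, H j * V = V * φ j)
    (e z : Fin nx → ℝ) (v : Fin nu → ℝ) (α α' : Fin nv → ℝ)
    (he : V.mulVec e ≤ α)
    (hα' : ∀ j, (H j).mulVec α +
      V.mulVec ((φ j - φhat).mulVec z + (B j - Bhat).mulVec v) ≤ α') :
    V.mulVec (φstar.mulVec e + (φstar - φhat).mulVec z
      + (Bstar - Bhat).mulVec v) ≤ α' := by
  -- Express the convex-combination differences as convex combinations of differences
  have hφd : φstar - φhat = ∑ j, μ j • (φ j - φhat) := by
    rw [hφstar]
    rw [show (∑ j, μ j • (φ j - φhat)) = (∑ j, μ j • φ j) - (∑ j, μ j) • φhat by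
      rw [Finset.sum_smul]; rw [← Finset.sum_sub_distrib]; simp [smul_sub]]
    rw [hμ_sum, one_smul]
  have hBd : Bstar - Bhat = ∑ j, μ j • (B j - Bhat) := by
    rw [hBstar]
    rw [show (∑ j, μ j • (B j - Bhat)) = (∑ j, μ j • B j) - (∑ j, μ j) • Bhat by
      rw [Finset.sum_smul]; rw [← Finset.sum_sub_distrib]; simp [smul_sub]]
    rw [hμ_sum, one_smul]
  -- Rewrite the left-hand side as a convex combination over the vertices
  have hlhs : V.mulVec (φstar.mulVec e + (φstar - φhat).mulVec z
      + (Bstar - Bhat).mulVec v)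
      = ∑ j, μ j • (V.mulVec ((φ j).mulVec e)
          + V.mulVec ((φ j - φhat).mulVec z + (B j - Bhat).mulVec v)) := by
    rw [hφd, hBd, hφstar]
    rw [sum_mulVec', sum_mulVec', sum_mulVec']
    simp only [Matrix.smul_mulVec]
    rw [← Finset.sum_add_distrib, ← Finset.sum_add_distrib, mulVec_sum']
    refine Finset.sum_congr rfl fun j _ => ?_
    simp [Matrix.mulVec_add, Matrix.mulVec_smul, smul_add, add_assoc]
  rw [hlhs]
  -- Bound each vertex term
  have hterm : ∀ j, V.mulVec ((φ j).mulVec e)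
      + V.mulVec ((φ j - φhat).mulVec z + (B j - Bhat).mulVec v) ≤ α' := by
    intro j
    have h1 : V.mulVec ((φ j).mulVec e) = (H j).mulVec (V.mulVec e) := by
      rw [Matrix.mulVec_mulVec, Matrix.mulVec_mulVec, hHV j]
    have h2 : (H j).mulVec (V.mulVec e) ≤ (H j).mulVec α := by
      intro i
      simp only [Matrix.mulVec, dotProduct]
      exact Finset.sum_le_sum fun l _ =>
        mul_le_mul_of_nonneg_left (he l) (hH_nonneg j i l)
    calc V.mulVec ((φ j).mulVec e)
          + V.mulVec ((φ j - φhat).mulVec z + (B j - Bhat).mulVec v)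
        ≤ (H j).mulVec α
          + V.mulVec ((φ j - φhat).mulVec z + (B j - Bhat).mulVec v) := by
          rw [h1]; exact add_le_add_left h2 _
      _ ≤ α' := hα' j
  calc (∑ j, μ j • (V.mulVec ((φ j).mulVec e)
          + V.mulVec ((φ j - φhat).mulVec z + (B j - Bhat).mulVec v)))
      ≤ ∑ j, μ j • α' := by
        apply Finset.sum_le_sum
        intro j _
        exact smul_le_smul_of_nonneg_left (hterm j) (hμ_nonneg j)
    _ = α' := by rw [← Finset.sum_smul, hμ_sum, one_smul]
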